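/- A modal formula is derivable in the system S5 if and only if it is valid on every finite single-cluster frame, that is, on every frame consisting of a finite nonempty set W whose accessibility relation is the universal relation (R w v holds for all worlds w, v). -/

import Mathlib

/-- Modal formulas: falsum, propositional variables, implication, Box. -/
inductive ModalFormula : Type
  | falsum : ModalFormula
  | var : ℕ → ModalFormula
  | impl : ModalFormula → ModalFormula → ModalFormula
  | box : ModalFormula → ModalFormula

namespace ModalFormula

/-- Negation: ¬φ := φ → ⊥. -/
def neg (φ : ModalFormula) : ModalFormula := impl φ falsum

/-- Disjunction: φ ∨ ψ := ¬φ → ψ. -/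
def disj (φ ψ : ModalFormula) : ModalFormula := impl (neg φ) ψ

/-- Conjunction: φ ∧ ψ := ¬(φ → ¬ψ). -/
def conj (φ ψ : ModalFormula) : ModalFormula := neg (impl φ (neg ψ))

/-- Diamond: ◇φ := ¬□¬φ. -/
def dia (φ : ModalFormula) : ModalFormula := neg (box (neg φ))

end ModalFormula

/-- A Kripke model: worlds, accessibility relation, valuation. -/
structure KripkeModel where
  W : Type
  R : W → W → Prop
  V : W → ℕ → Prop

/-- Truth of a modal formula at a world of a Kripke model. -/
def KripkeModel.truth (M : KripkeModel) : M.W → ModalFormula → Prop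
  | _, ModalFormula.falsum => False
  | w, ModalFormula.var n => M.V w n
  | w, ModalFormula.impl φ ψ => M.truth w φ → M.truth w ψ
  | w, ModalFormula.box φ => ∀ v, M.R w v → M.truth v φ

/-- A formula is valid on a frame (W, R) if it is true at every world of
every Kripke model with that frame. -/
def ValidOnFrame (W : Type) (R : W → W → Prop) (φ : ModalFormula) : Prop :=
  ∀ V : W → ℕ → Prop, ∀ w : W, KripkeModel.truth ⟨W, R, V⟩ w φ

/-- φ is a substitution instance of a classical propositional tautology:
it is true under every assignment of truth values to formulas that respects
falsum and implication (variables and boxed formulas may get arbitrary values). -/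
def TautInstance (φ : ModalFormula) : Prop :=
  ∀ v : ModalFormula → Prop,
    (¬ v ModalFormula.falsum) →
    (∀ a b : ModalFormula, v (ModalFormula.impl a b) ↔ (v a → v b)) →
    v φ

/-- Derivability from a set of axioms `Ax`: the smallest set of formulas
containing all substitution instances of propositional tautologies and all
formulas in `Ax`, closed under modus ponens and necessitation. -/
inductive Derivable (Ax : ModalFormula → Prop) : ModalFormula → Prop
  | taut (φ : ModalFormula) : TautInstance φ → Derivable Ax φ
  | ax (φ : ModalFormula) : Ax φ → Derivable Ax φ
  | mp (φ ψ : ModalFormula) :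
      Derivable Ax (ModalFormula.impl φ ψ) → Derivable Ax φ → Derivable Ax ψ
  | nec (φ : ModalFormula) : Derivable Ax φ → Derivable Ax (ModalFormula.box φ)

/-- Scheme K: □(φ → ψ) → (□φ → □ψ). -/
def AxK (χ : ModalFormula) : Prop :=
  ∃ φ ψ : ModalFormula,
    χ = ModalFormula.impl (ModalFormula.box (ModalFormula.impl φ ψ))
          (ModalFormula.impl (ModalFormula.box φ) (ModalFormula.box ψ))

/-- Scheme T: □φ → φ. -/
def AxT (χ : ModalFormula) : Prop :=
  ∃ φ : ModalFormula, χ = ModalFormula.impl (ModalFormula.box φ) φ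

/-- Scheme 4: □φ → □□φ. -/
def Ax4 (χ : ModalFormula) : Prop :=
  ∃ φ : ModalFormula,
    χ = ModalFormula.impl (ModalFormula.box φ) (ModalFormula.box (ModalFormula.box φ))

/-- Scheme .2: ◇□φ → □◇φ. -/
def AxDot2 (χ : ModalFormula) : Prop :=
  ∃ φ : ModalFormula,
    χ = ModalFormula.impl (ModalFormula.dia (ModalFormula.box φ))
          (ModalFormula.box (ModalFormula.dia φ))

/-- Scheme .3: (◇φ ∧ ◇ψ) → ◇[(φ ∧ ◇ψ) ∨ (ψ ∧ ◇φ)]. -/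
def AxDot3 (χ : ModalFormula) : Prop :=
  ∃ φ ψ : ModalFormula,
    χ = ModalFormula.impl
          (ModalFormula.conj (ModalFormula.dia φ) (ModalFormula.dia ψ))
          (ModalFormula.dia
            (ModalFormula.disj (ModalFormula.conj φ (ModalFormula.dia ψ))
              (ModalFormula.conj ψ (ModalFormula.dia φ))))

/-- Scheme 5: ◇□φ → φ. -/
def Ax5 (χ : ModalFormula) : Prop :=
  ∃ φ : ModalFormula,
    χ = ModalFormula.impl (ModalFormula.dia (ModalFormula.box φ)) φ

/-- Axioms of S4: K + T + 4. -/
def S4Ax (χ : ModalFormula) : Prop := AxK χ ∨ AxT χ ∨ Ax4 χ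

/-- Axioms of S4.2: S4 + .2. -/
def S42Ax (χ : ModalFormula) : Prop := S4Ax χ ∨ AxDot2 χ

/-- Axioms of S4.3: S4 + .3. -/
def S43Ax (χ : ModalFormula) : Prop := S4Ax χ ∨ AxDot3 χ

/-- Axioms of S5: S4 + 5. -/
def S5Ax (χ : ModalFormula) : Prop := S4Ax χ ∨ Ax5 χ

open ModalFormula

deriving instance DecidableEq for ModalFormula

namespace S5Proof

abbrev Der (φ : ModalFormula) : Prop := Derivable S5Ax φ

lemma taut_of {φ : ModalFormula}
    (h : ∀ v : ModalFormula → Prop, (¬ v falsum) →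
      (∀ a b, v (impl a b) ↔ (v a → v b)) → v φ) : Der φ :=
  Derivable.taut φ h

lemma dmp {a b : ModalFormula} (h1 : Der (impl a b)) (h2 : Der a) : Der b :=
  Derivable.mp a b h1 h2

lemma dK (a b : ModalFormula) : Der (impl (box (impl a b)) (impl (box a) (box b))) :=
  Derivable.ax _ (Or.inl (Or.inl ⟨a, b, rfl⟩))

lemma dT (a : ModalFormula) : Der (impl (box a) a) :=
  Derivable.ax _ (Or.inl (Or.inr (Or.inl ⟨a, rfl⟩)))

lemma d4 (a : ModalFormula) : Der (impl (box a) (box (box a))) :=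
  Derivable.ax _ (Or.inl (Or.inr (Or.inr ⟨a, rfl⟩)))

lemma d5ax (a : ModalFormula) : Der (impl (dia (box a)) a) :=
  Derivable.ax _ (Or.inr ⟨a, rfl⟩)

lemma dbox_mono {a b : ModalFormula} (h : Der (impl a b)) :
    Der (impl (box a) (box b)) :=
  dmp (dK a b) (Derivable.nec _ h)

lemma dd_trans {a b c : ModalFormula} (h1 : Der (impl a b)) (h2 : Der (impl b c)) :
    Der (impl a c) := by
  refine dmp (dmp (taut_of ?_) h1) h2
  intro v hf hi
  simp only [hi]; tauto

section Vlemmas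
variable {v : ModalFormula → Prop}

lemma v_neg (hf : ¬ v falsum) (hi : ∀ a b, v (impl a b) ↔ (v a → v b)) (a : ModalFormula) :
    v (neg a) ↔ ¬ v a := by
  simp only [neg, hi]; tauto

lemma v_conj (hf : ¬ v falsum) (hi : ∀ a b, v (impl a b) ↔ (v a → v b)) (a b : ModalFormula) :
    v (conj a b) ↔ (v a ∧ v b) := by
  simp only [conj, neg, hi]; tauto

lemma v_disj (hf : ¬ v falsum) (hi : ∀ a b, v (impl a b) ↔ (v a → v b)) (a b : ModalFormula) :
    v (disj a b) ↔ (v a ∨ v b) := by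
  simp only [disj, neg, hi]; tauto

end Vlemmas

/-- literal -/
def lit (c : ModalFormula → Bool) (ψ : ModalFormula) : ModalFormula :=
  if c ψ then ψ else neg ψ

/-- conjunction of literals along a list -/
def chi (c : ModalFormula → Bool) : List ModalFormula → ModalFormula
  | [] => neg falsum
  | ψ :: L => conj (lit c ψ) (chi c L)

def bigdisj : List ModalFormula → ModalFormula
  | [] => falsum
  | ψ :: L => disj ψ (bigdisj L)

section Vlemmas2
variable {v : ModalFormula → Prop}

lemma v_lit (hf : ¬ v falsum) (hi : ∀ a b, v (impl a b) ↔ (v a → v b))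
    (c : ModalFormula → Bool) (ψ : ModalFormula) :
    v (lit c ψ) ↔ (v ψ ↔ c ψ = true) := by
  unfold lit
  cases h : c ψ <;> simp [h, v_neg hf hi]

lemma v_chi (hf : ¬ v falsum) (hi : ∀ a b, v (impl a b) ↔ (v a → v b))
    (c : ModalFormula → Bool) (L : List ModalFormula) :
    v (chi c L) ↔ ∀ ψ ∈ L, (v ψ ↔ c ψ = true) := by
  induction L with
  | nil => simp [chi, v_neg hf hi, hf]
  | cons ψ L ih =>
      rw [chi, v_conj hf hi, ih, v_lit hf hi]
      constructor
      · rintro ⟨h1, h2⟩ θ hθ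
        rcases List.mem_cons.1 hθ with h | h
        · subst h; exact h1
        · exact h2 θ h
      · intro h
        exact ⟨h ψ List.mem_cons_self, fun θ hθ => h θ (List.mem_cons_of_mem ψ hθ)⟩

lemma v_bigdisj (hf : ¬ v falsum) (hi : ∀ a b, v (impl a b) ↔ (v a → v b))
    (L : List ModalFormula) :
    v (bigdisj L) ↔ ∃ ψ ∈ L, v ψ := by
  induction L with
  | nil => simp [bigdisj, hf]
  | cons ψ L ih => rw [bigdisj, v_disj hf hi, ih]; simp

end Vlemmas2

/-- all Boolean signings over a list -/
def signings : List ModalFormula → List (ModalFormula → Bool)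
  | [] => [fun _ => false]
  | ψ :: L => (signings L).flatMap
      (fun c => [Function.update c ψ true, Function.update c ψ false])

lemma signings_exists (g : ModalFormula → Bool) :
    ∀ L : List ModalFormula, ∃ c ∈ signings L, ∀ ψ ∈ L, c ψ = g ψ := by
  intro L
  induction L with
  | nil => exact ⟨fun _ => false, by simp [signings], by simp⟩
  | cons ψ L ih =>
      obtain ⟨c, hc, hmatch⟩ := ih
      refine ⟨Function.update c ψ (g ψ), ?_, ?_⟩
      · simp only [signings, List.mem_flatMap]
        refine ⟨c, hc, ?_⟩
        cases h : g ψ <;> simp [h]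
      · intro θ hθ
        rcases List.mem_cons.1 hθ with h | h
        · subst h; simp [Function.update]
        · by_cases he : θ = ψ
          · subst he; simp [Function.update]
          · rw [Function.update_of_ne he]; exact hmatch θ h

/-- consistency of a signing relative to a list of formulas -/
def Con (S : List ModalFormula) (c : ModalFormula → Bool) : Prop :=
  ¬ Der (neg (chi c S))

lemma d_alldisj (S : List ModalFormula) :
    Der (bigdisj ((signings S).map (fun c => chi c S))) := by
  apply taut_of
  intro v hf hi
  rw [v_bigdisj hf hi]
  classical
  obtain ⟨c, hc, hmatch⟩ := signings_exists (fun ψ => decide (v ψ)) S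
  refine ⟨chi c S, List.mem_map.2 ⟨c, hc, rfl⟩, ?_⟩
  rw [v_chi hf hi]
  intro ψ hψ
  rw [hmatch ψ hψ]
  simp

lemma refute (S : List ModalFormula) (α : ModalFormula) :
    ∀ L : List (ModalFormula → Bool),
      Der (impl α (bigdisj (L.map (fun c => chi c S)))) →
      (∀ c ∈ L, Der (impl α (neg (chi c S)))) →
      Der (neg α) := by
  intro L
  induction L with
  | nil => intro h _; exact h
  | cons c L ih =>
      intro h1 hall
      have h2 : Der (impl α (neg (chi c S))) := hall c List.mem_cons_self
      refine ih ?_ (fun d hd => hall d (List.mem_cons_of_mem c hd))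
      refine dmp (dmp (taut_of ?_) h1) h2
      intro v hf hi
      simp only [List.map_cons, bigdisj, disj, neg, hi]
      tauto

/-- S5 theorem: ¬φ → □¬□φ -/
lemma d5lemma' (a : ModalFormula) : Der (impl (neg a) (box (neg (box a)))) := by
  have h := d5ax a
  refine dmp (taut_of ?_) h
  intro v hf hi
  simp only [dia, neg, hi]
  tauto

/-- S5 theorem: ¬□a → □¬□a -/
lemma d5lemma (a : ModalFormula) : Der (impl (neg (box a)) (box (neg (box a)))) := by
  have h1 : Der (impl (neg (box a)) (box (neg (box (box a))))) := d5lemma' (box a)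
  have h2 : Der (impl (neg (box (box a))) (neg (box a))) := by
    refine dmp (taut_of ?_) (d4 a)
    intro v hf hi; simp only [neg, hi]; tauto
  exact dd_trans h1 (dbox_mono h2)

def isBox : ModalFormula → Bool
  | box _ => true
  | _ => false

/-- a conjunction of boxed/negated-boxed literals implies its own box -/
lemma chi_box (c : ModalFormula → Bool) :
    ∀ L : List ModalFormula, (∀ θ ∈ L, ∃ γ, θ = box γ) →
      Der (impl (chi c L) (box (chi c L))) := by
  intro L
  induction L with
  | nil =>
      intro _
      have ht : Der (neg falsum) := taut_of (by intro v hf hi; rw [v_neg hf hi]; exact hf)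
      have hb : Der (box (neg falsum)) := Derivable.nec _ ht
      refine dmp (taut_of ?_) hb
      intro v hf hi; simp only [chi, hi]; tauto
  | cons θ L ih =>
      intro hall
      obtain ⟨γ, rfl⟩ := hall θ List.mem_cons_self
      have ihL := ih (fun x hx => hall x (List.mem_cons_of_mem _ hx))
      have hl : Der (impl (lit c (box γ)) (box (lit c (box γ)))) := by
        unfold lit
        cases h : c (box γ)
        · simp only [Bool.false_eq_true, if_false]; exact d5lemma γ
        · simp only [if_true]; exact d4 γ
      -- □l → (□R → □(l ∧ R))
      set l := lit c (box γ) with hldef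
      set Rr := chi c L with hRdef
      have hpair : Der (impl l (impl Rr (conj l Rr))) :=
        taut_of (by intro v hf hi; simp only [hi, v_conj hf hi]; tauto)
      have hstep : Der (impl (box l) (box (impl Rr (conj l Rr)))) := dbox_mono hpair
      have hK2 : Der (impl (box (impl Rr (conj l Rr))) (impl (box Rr) (box (conj l Rr)))) :=
        dK Rr (conj l Rr)
      have hcomb : Der (impl (box l) (impl (box Rr) (box (conj l Rr)))) :=
        dd_trans hstep hK2
      show Der (impl (conj l Rr) (box (conj l Rr)))
      refine dmp (dmp (dmp (taut_of ?_) hl) ihL) hcomb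
      intro v hf hi
      simp only [hi, v_conj hf hi]
      tauto

def subs : ModalFormula → List ModalFormula
  | .falsum => [falsum]
  | .var n => [var n]
  | .impl a b => impl a b :: (subs a ++ subs b)
  | .box a => box a :: subs a

lemma mem_subs_self (φ : ModalFormula) : φ ∈ subs φ := by
  cases φ <;> simp [subs]

lemma subs_subset {φ ψ : ModalFormula} (h : ψ ∈ subs φ) : subs ψ ⊆ subs φ := by
  induction φ with
  | falsum => simp [subs] at h; subst h; exact fun x hx => hx
  | var n => simp [subs] at h; subst h; exact fun x hx => hx
  | impl a b iha ihb =>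
      rw [subs] at h
      rcases List.mem_cons.1 h with h | h
      · subst h; exact fun x hx => hx
      · rcases List.mem_append.1 h with h | h
        · exact fun x hx => List.mem_cons_of_mem _ (List.mem_append_left _ (iha h hx))
        · exact fun x hx => List.mem_cons_of_mem _ (List.mem_append_right _ (ihb h hx))
  | box a iha =>
      rw [subs] at h
      rcases List.mem_cons.1 h with h | h
      · subst h; exact fun x hx => hx
      · exact fun x hx => List.mem_cons_of_mem _ (iha h hx)

lemma closure_impl {φ a b : ModalFormula} (h : impl a b ∈ subs φ) :
    a ∈ subs φ ∧ b ∈ subs φ :=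
  ⟨subs_subset h (by simp [subs, mem_subs_self]),
   subs_subset h (by simp [subs, mem_subs_self])⟩

lemma closure_box {φ a : ModalFormula} (h : box a ∈ subs φ) : a ∈ subs φ :=
  subs_subset h (by simp [subs, mem_subs_self])

section ConLemmas
variable {S : List ModalFormula} {c : ModalFormula → Bool}

lemma con_falsum (hc : Con S c) (hm : falsum ∈ S) : c falsum = false := by
  by_contra h
  rw [Bool.not_eq_false] at h
  apply hc; apply taut_of
  intro v hf hi
  rw [v_neg hf hi]
  intro hv
  exact hf (((v_chi hf hi c S).1 hv falsum hm).2 h)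

lemma con_impl {a b : ModalFormula} (hc : Con S c) (hm : impl a b ∈ S)
    (ha : a ∈ S) (hb : b ∈ S) :
    c (impl a b) = true ↔ (c a = true → c b = true) := by
  by_contra h
  apply hc; apply taut_of
  intro v hf hi
  rw [v_neg hf hi]
  intro hv
  have hp := (v_chi hf hi c S).1 hv
  have h1 := hp _ hm
  have h2 := hp _ ha
  have h3 := hp _ hb
  rw [hi] at h1
  tauto

lemma con_T {a : ModalFormula} (hc : Con S c) (hm : box a ∈ S) (ha : a ∈ S)
    (hb : c (box a) = true) : c a = true := by
  by_contra h
  apply hc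
  refine dmp (taut_of ?_) (dT a)
  intro v hf hi
  rw [hi, v_neg hf hi]
  intro hT hv
  have hp := (v_chi hf hi c S).1 hv
  rw [hi] at hT
  have := hT ((hp _ hm).2 hb)
  exact h ((hp _ ha).1 this)

end ConLemmas

lemma witness (S : List ModalFormula) (ψ : ModalFormula) (hψ : ψ ∈ S)
    (hbψ : box ψ ∈ S) (w : ModalFormula → Bool) (hwcon : Con S w)
    (hwb : w (box ψ) = false) :
    ∃ c ∈ signings S, Con S c ∧ (∀ θ, box θ ∈ S → c (box θ) = w (box θ)) ∧
      c ψ = false := by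
  by_contra hno
  push_neg at hno
  classical
  set B := chi w (S.filter (fun θ => isBox θ)) with hBdef
  have hBψ : Der (impl B ψ) := by
    have hr : Der (neg (neg (impl B ψ))) := by
      refine refute S (neg (impl B ψ)) (signings S) ?_ ?_
      · refine dmp (taut_of ?_) (d_alldisj S)
        intro v hf hi; simp only [hi]; tauto
      · intro c hcmem
        by_cases hcψ : c ψ = true
        · apply taut_of
          intro v hf hi
          simp only [neg, hi]
          intro h1 h2
          refine h1 (fun hB => ?_)
          exact ((v_chi hf hi c S).1 h2 ψ hψ).2 hcψ
        · by_cases hbe : ∀ θ, box θ ∈ S → c (box θ) = w (box θ)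
          · have hcf : c ψ = false := by simpa using hcψ
            have hncon : ¬ Con S c := fun hcon => hcψ (by
              have := hno c hcmem hcon hbe
              simpa [hcf] using this)
            rw [Con, not_not] at hncon
            refine dmp (taut_of ?_) hncon
            intro v hf hi; simp only [neg, hi]; tauto
          · push_neg at hbe
            obtain ⟨θ, hθS, hθne⟩ := hbe
            apply taut_of
            intro v hf hi
            simp only [neg, hi]
            intro h1 h2
            refine h1 (fun hB => False.elim ?_)
            have hc1 := (v_chi hf hi c S).1 h2 _ hθS
            have hmemf : box θ ∈ S.filter (fun θ => isBox θ) :=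
              List.mem_filter.2 ⟨hθS, rfl⟩
            have hc2 := (v_chi hf hi w _).1 hB _ hmemf
            apply hθne
            cases h1 : c (box θ) <;> cases h2 : w (box θ) <;>
              simp_all
    exact dmp (taut_of (by intro v hf hi; simp only [neg, hi]; tauto)) hr
  have hBbox : Der (impl B (box B)) := by
    refine chi_box w _ (fun θ hθ => ?_)
    have := (List.mem_filter.1 hθ).2
    cases θ <;> simp [isBox] at this ⊢
  have h1 : Der (impl B (box ψ)) := dd_trans hBbox (dbox_mono hBψ)
  have hχB : Der (impl (chi w S) B) := by
    apply taut_of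
    intro v hf hi
    rw [hi]
    intro hv
    rw [hBdef, v_chi hf hi]
    intro θ hθ
    exact (v_chi hf hi w S).1 hv θ (List.mem_filter.1 hθ).1
  have hχnb : Der (impl (chi w S) (neg (box ψ))) := by
    apply taut_of
    intro v hf hi
    rw [hi, v_neg hf hi]
    intro hv hb
    have := ((v_chi hf hi w S).1 hv _ hbψ).1 hb
    simp [hwb] at this
  apply hwcon
  refine dmp (dmp (dmp (taut_of ?_) hχB) h1) hχnb
  intro v hf hi
  simp only [neg, hi]
  tauto

def Wt (S : List ModalFormula) (a₀ : ModalFormula → Bool) : Type :=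
  {c : ModalFormula → Bool // c ∈ signings S ∧ Con S c ∧
    ∀ θ, box θ ∈ S → c (box θ) = a₀ (box θ)}

def Mod (S : List ModalFormula) (a₀ : ModalFormula → Bool) : KripkeModel :=
  ⟨Wt S a₀, fun _ _ => True, fun w n => w.1 (var n) = true⟩

lemma truth_lemma (S : List ModalFormula)
    (hci : ∀ a b, impl a b ∈ S → a ∈ S ∧ b ∈ S)
    (hcb : ∀ a, box a ∈ S → a ∈ S) (a₀ : ModalFormula → Bool) :
    ∀ ψ, ψ ∈ S → ∀ w : Wt S a₀, ((Mod S a₀).truth w ψ ↔ w.1 ψ = true) := by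
  intro ψ
  induction ψ with
  | falsum =>
      intro hm w
      show False ↔ _
      simp [con_falsum w.2.2.1 hm]
  | var n =>
      intro hm w
      exact Iff.rfl
  | impl a b iha ihb =>
      intro hm w
      obtain ⟨haS, hbS⟩ := hci a b hm
      show ((Mod S a₀).truth w a → (Mod S a₀).truth w b) ↔ _
      rw [iha haS w, ihb hbS w]
      exact (con_impl w.2.2.1 hm haS hbS).symm
  | box ψ ih =>
      intro hm w
      have hψS := hcb ψ hm
      show (∀ v : Wt S a₀, True → (Mod S a₀).truth v ψ) ↔ _
      constructor
      · intro ht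
        by_contra hne
        have hwf : w.1 (box ψ) = false := by simpa using hne
        obtain ⟨c, hcm, hccon, hcbe, hcψ⟩ :=
          witness S ψ hψS hm w.1 w.2.2.1 hwf
        have hcbe0 : ∀ θ, box θ ∈ S → c (box θ) = a₀ (box θ) :=
          fun θ h => (hcbe θ h).trans (w.2.2.2 θ h)
        have h1 := ht ⟨c, hcm, hccon, hcbe0⟩ trivial
        have h2 := (ih hψS ⟨c, hcm, hccon, hcbe0⟩).1 h1
        exact Bool.noConfusion (hcψ.symm.trans (h2 : c ψ = true))
      · intro hb v _
        have hveq : v.1 (box ψ) = true := by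
          rw [v.2.2.2 ψ hm, ← w.2.2.2 ψ hm]; exact hb
        exact (ih hψS v).2 (con_T v.2.2.1 hm hψS hveq)

lemma soundness {W : Type} {R : W → W → Prop} (huniv : ∀ w v, R w v)
    {φ : ModalFormula} (h : Der φ) : ValidOnFrame W R φ := by
  induction h with
  | taut ψ ht =>
      intro V w
      exact ht (fun χ => KripkeModel.truth ⟨W, R, V⟩ w χ) (fun h => h)
        (fun a b => Iff.rfl)
  | ax ψ hax =>
      intro V w
      simp only [S5Ax, S4Ax, AxK, AxT, Ax4, Ax5] at hax
      rcases hax with (⟨a, b, rfl⟩ | ⟨a, rfl⟩ | ⟨a, rfl⟩) | ⟨a, rfl⟩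
      · intro h1 h2 v hv
        exact h1 v hv (h2 v hv)
      · intro hb
        exact hb w (huniv w w)
      · intro hb v _ u _
        exact hb u (huniv w u)
      · intro hd
        by_contra hna
        exact hd (fun v _ hv => hna (hv w (huniv v w)))
  | mp a b h1 h2 ih1 ih2 =>
      intro V w
      exact ih1 V w (ih2 V w)
  | nec a h ih =>
      intro V w v _
      exact ih V v

lemma exists_atom (S : List ModalFormula) (φ : ModalFormula) (hφS : φ ∈ S)
    (hnd : ¬ Der φ) : ∃ c ∈ signings S, Con S c ∧ c φ = false := by
  by_contra hno
  push_neg at hno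
  apply hnd
  have hr : Der (neg (neg φ)) := by
    refine refute S (neg φ) (signings S) ?_ ?_
    · refine dmp (taut_of ?_) (d_alldisj S)
      intro v hf hi; simp only [hi]; tauto
    · intro c hc
      by_cases hcφ : c φ = false
      · have hncon : ¬ Con S c := fun h => hno c hc h hcφ
        rw [Con, not_not] at hncon
        refine dmp (taut_of ?_) hncon
        intro v hf hi; simp only [neg, hi]; tauto
      · rw [Bool.not_eq_false] at hcφ
        apply taut_of
        intro v hf hi
        simp only [neg, hi]
        intro h1 h2
        exact h1 (((v_chi hf hi c S).1 h2 φ hφS).2 hcφ)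
  refine dmp (taut_of ?_) hr
  intro v hf hi; simp only [neg, hi]; tauto

end S5Proof

/-- S5 is characterized by the class of finite single-cluster frames:
a modal formula is derivable in S5 iff it is valid on every frame consisting
of a finite nonempty set of worlds with the universal accessibility relation. -/
theorem S5_characterized_by_finite_single_clusters (φ : ModalFormula) :
    Derivable S5Ax φ ↔
      ∀ (W : Type) (R : W → W → Prop),
        Finite W → Nonempty W → (∀ w v : W, R w v) → ValidOnFrame W R φ := by
  constructor
  · intro h W R _ _ huniv
    exact S5Proof.soundness huniv h
  · intro hval
    by_contra hnd
    obtain ⟨a₀, ha₀m, ha₀c, ha₀φ⟩ :=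
      S5Proof.exists_atom (S5Proof.subs φ) φ (S5Proof.mem_subs_self φ) hnd
    haveI hfin1 : Finite
        {c : ModalFormula → Bool // c ∈ S5Proof.signings (S5Proof.subs φ)} :=
      (List.finite_toSet _).to_subtype
    haveI hfin : Finite (S5Proof.Wt (S5Proof.subs φ) a₀) :=
      Finite.of_injective
        (fun w => (⟨w.1, w.2.1⟩ :
          {c : ModalFormula → Bool // c ∈ S5Proof.signings (S5Proof.subs φ)}))
        (by
          intro x y h
          have : x.1 = y.1 :=
            congrArg (fun z : {c : ModalFormula → Bool //
              c ∈ S5Proof.signings (S5Proof.subs φ)} => z.1) h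
          exact Subtype.ext this)
    have hne : Nonempty (S5Proof.Wt (S5Proof.subs φ) a₀) :=
      ⟨⟨a₀, ha₀m, ha₀c, fun θ _ => rfl⟩⟩
    have hv := hval (S5Proof.Wt (S5Proof.subs φ) a₀) (fun _ _ => True) hfin hne
      (fun _ _ => trivial)
    have ht := hv (fun w n => w.1 (ModalFormula.var n) = true)
      ⟨a₀, ha₀m, ha₀c, fun θ _ => rfl⟩
    have hres := (S5Proof.truth_lemma (S5Proof.subs φ)
      (fun a b h => S5Proof.closure_impl h) (fun a h => S5Proof.closure_box h) a₀ φ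
      (S5Proof.mem_subs_self φ) ⟨a₀, ha₀m, ha₀c, fun θ _ => rfl⟩).1 ht
    exact Bool.noConfusion (ha₀φ.symm.trans (hres : a₀ φ = true))
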